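/- arXiv:2502.04889 — 5 statements merged into one kernel-verified Lean document; each statement's English description precedes it below -/
import Mathlib

section
/- For the semi-circle entropy $\phi(\mu) = -2\sqrt{\mu(1-\mu)}$ on $[0,1]$, the Fenchel--Young loss generated by $\phi$ equals $\ell(z) = \phi^*(-z) = \frac{-z + \sqrt{z^2+4}}{2}$ for all $z \in \mathbb{R}$, where $\phi^*(\theta) = \sup_{\mu\in[0,1]}[\theta\mu - \phi(\mu)]$. -/
/-- The Fenchel–Young loss generated by the semi-circle entropy
`φ μ = -2√(μ(1-μ))` on `[0,1]` is `ℓ z = φ*(-z) = (-z + √(z²+4))/2`, where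
`φ* θ = sup_{μ ∈ [0,1]} (θ μ - φ μ)`. -/
theorem semicircle_fenchel_young_loss :
    ∀ z : ℝ,
      IsGreatest
        {v : ℝ | ∃ μ ∈ Set.Icc (0 : ℝ) 1,
          v = (-z) * μ - (-2 * Real.sqrt (μ * (1 - μ)))}
        ((-z + Real.sqrt (z ^ 2 + 4)) / 2) := by
  intro z
  set s := Real.sqrt (z ^ 2 + 4) with hsdef
  have hs2 : s ^ 2 = z ^ 2 + 4 := Real.sq_sqrt (by positivity)
  have hspos : 0 < s := Real.sqrt_pos.2 (by positivity)
  have hzs : |z| < s := by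
    rw [hsdef, ← Real.sqrt_sq_eq_abs]
    exact Real.sqrt_lt_sqrt (sq_nonneg z) (by linarith)
  have h1 : z < s := lt_of_abs_lt hzs
  have h2 : -s < z := neg_lt_of_abs_lt hzs
  constructor
  · refine ⟨(s - z) / (2 * s), ⟨?_, ?_⟩, ?_⟩
    · apply div_nonneg <;> linarith
    · rw [div_le_one (by linarith)]; linarith
    · have hmu : (s - z) / (2 * s) * (1 - (s - z) / (2 * s)) = (1 / s) ^ 2 := by
        field_simp
        nlinarith [hs2]
      rw [hmu, Real.sqrt_sq (by positivity)]
      field_simp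
      nlinarith [hs2]
  · rintro v ⟨μ, ⟨hμ0, hμ1⟩, rfl⟩
    set b := Real.sqrt (μ * (1 - μ)) with hbdef
    have hb0 : 0 ≤ b := Real.sqrt_nonneg _
    have hb2 : b ^ 2 = μ * (1 - μ) := Real.sq_sqrt (by nlinarith)
    nlinarith [sq_nonneg (z * b + 2 * μ - 1), sq_nonneg (s / 2 - (2 * b - z * (μ - 1/2))), sq_nonneg (s / 2 + (2 * b - z * (μ - 1/2))), mul_pos hspos hspos]
end

section
/- For the semi-circle loss $\ell(z) = (-z+\sqrt{z^2+4})/2$, the function $\rho(\lambda) = \min_{z\in\mathbb{R}}\lambda\ell(z)+z^2$ satisfies $\rho(\lambda) \le \frac{5\lambda}{2\ln\lambda}$ for $\lambda$ large enough that $\lambda/\ln\lambda \ge (2/3)\ln^2\lambda$ and $\ln\lambda>0$. -/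
/-- For the semi-circle loss `ℓ z = (-z + √(z²+4))/2`, the function
`ρ λ = min_z (λ ℓ z + z²)` satisfies `ρ λ ≤ 5 λ / (2 ln λ)` whenever
`λ / ln λ ≥ (2/3) (ln λ)²` and `ln λ > 0`. -/
theorem semicircle_rho_bound
    (ℓ : ℝ → ℝ) (hℓ : ∀ z, ℓ z = (-z + Real.sqrt (z ^ 2 + 4)) / 2)
    (ρ : ℝ → ℝ)
    (hρ : ∀ lam : ℝ, 0 < Real.log lam →
      IsLeast {v : ℝ | ∃ z : ℝ, v = lam * ℓ z + z ^ 2} (ρ lam)) :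
    ∀ lam : ℝ, 0 < Real.log lam →
      lam / Real.log lam ≥ (2 / 3) * (Real.log lam) ^ 2 →
      ρ lam ≤ 5 * lam / (2 * Real.log lam) := by
  intro lam hL hratio
  set L := Real.log lam with hLdef
  have hlam : 0 < lam := by
    have hL2 : (0:ℝ) < 2 / 3 * L ^ 2 := by positivity
    have hdiv : 0 < lam / L := lt_of_lt_of_le hL2 hratio
    by_contra h
    push_neg at h
    have : lam / L ≤ 0 := div_nonpos_of_nonpos_of_nonneg h hL.le
    linarith
  -- ρ lam ≤ lam * ℓ L + L ^ 2
  have hmem : lam * ℓ L + L ^ 2 ∈ {v : ℝ | ∃ z : ℝ, v = lam * ℓ z + z ^ 2} := ⟨L, rfl⟩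
  have hle : ρ lam ≤ lam * ℓ L + L ^ 2 := (hρ lam hL).2 hmem
  -- ℓ L ≤ 1 / L
  have hsqrt : Real.sqrt (L ^ 2 + 4) ≤ L + 2 / L := by
    rw [show L + 2 / L = Real.sqrt ((L + 2 / L) ^ 2) from
      (Real.sqrt_sq (by positivity)).symm]
    apply Real.sqrt_le_sqrt
    have h2 : (2 / L) ^ 2 ≥ 0 := sq_nonneg _
    have : (L + 2 / L) ^ 2 = L ^ 2 + 4 + (2 / L) ^ 2 := by
      field_simp
      ring
    nlinarith
  have hℓL : ℓ L ≤ 1 / L := by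
    rw [hℓ L]
    rw [div_le_iff₀ (by norm_num : (0:ℝ) < 2)] at *
    have : 1 / L * 2 = 2 / L := by ring
    nlinarith [hsqrt]
  have h1 : lam * ℓ L ≤ lam / L := by
    calc lam * ℓ L ≤ lam * (1 / L) := by
          exact mul_le_mul_of_nonneg_left hℓL hlam.le
      _ = lam / L := by ring
  have h2 : L ^ 2 ≤ (3 / 2) * (lam / L) := by nlinarith [hratio]
  have : ρ lam ≤ lam / L + (3 / 2) * (lam / L) := by linarith
  calc ρ lam ≤ (5 / 2) * (lam / L) := by linarith
    _ = 5 * lam / (2 * L) := by field_simp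
end

section
/- For the Tsallis entropy $\phi(\mu) = \frac{\mu^q+(1-\mu)^q-1}{q-1}$ with $q \ge 2$, the limit $\lim_{\mu\downarrow 0} \frac{\phi'(\mu)}{\mu\phi''(\mu)}\left[1 - \frac{\phi(\mu)}{\mu\phi'(\mu)}\right] = \frac{1}{2}$. -/
open Real Filter Set

/-- For the Tsallis entropy `φ μ = (μ^q + (1-μ)^q - 1)/(q-1)`
with `q ≥ 2`, where `φ' μ = (q/(q-1)) q [μ^{q-1} - (1-μ)^{q-1}]`—i.e.
`φ' μ = (q/(q-1))[...]` and `φ'' μ = q[μ^{q-2} + (1-μ)^{q-2}]`—the limit as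
`μ ↓ 0` of `(φ' μ)/(μ φ'' μ) * (1 - φ μ / (μ φ' μ))` is `1/2`. -/
theorem tsallis_exponent_limit_q_ge_two (q : ℝ) (hq : 2 ≤ q) :
    Tendsto
      (fun μ : ℝ =>
        let φ := (μ ^ q + (1 - μ) ^ q - 1) / (q - 1)
        let φ' := (q / (q - 1)) * (μ ^ (q - 1) - (1 - μ) ^ (q - 1))
        let φ'' := q * (μ ^ (q - 2) + (1 - μ) ^ (q - 2))
        φ' / (μ * φ'') * (1 - φ / (μ * φ')))
      (nhdsWithin 0 (Set.Ioi 0)) (nhds (1 / 2)) := by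
  have hq0 : (0:ℝ) < q := by linarith
  have hq1 : (0:ℝ) < q - 1 := by linarith
  have hq2 : (0:ℝ) ≤ q - 2 := by linarith
  -- L'Hopital piece : g(μ)/μ² → q(q-1)/2 where g(μ) = 1 - (1+(q-1)μ)(1-μ)^{q-1}
  have hf : Tendsto (fun μ : ℝ => (1 - (1 + (q-1)*μ) * (1-μ) ^ (q-1)) / μ ^ 2)
      (nhdsWithin 0 (Set.Ioi 0)) (nhds (q * (q-1) / 2)) := by
    apply HasDerivAt.lhopital_zero_nhdsGT
      (f' := fun μ : ℝ => q * (q-1) * μ * (1-μ) ^ (q-2)) (g' := fun μ : ℝ => 2 * μ)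
    · filter_upwards [Ioo_mem_nhdsGT_of_mem (by norm_num : (0:ℝ) ∈ Ico 0 1)] with μ hμ
      have h1 : (0:ℝ) < 1 - μ := by linarith [hμ.2]
      have hr : HasDerivAt (fun μ : ℝ => (1-μ) ^ (q-1))
          ((q-1) * (1-μ) ^ (q-1-1) * (-1)) μ :=
        (Real.hasDerivAt_rpow_const (x := 1-μ) (p := q-1) (Or.inl h1.ne')).comp μ
          ((hasDerivAt_id μ).const_sub 1)
      have h2 : HasDerivAt (fun μ : ℝ => 1 + (q-1)*μ) (q-1) μ := by
        simpa using ((hasDerivAt_id μ).const_mul (q-1)).const_add 1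
      have := (h2.mul hr).const_sub 1
      refine this.congr_deriv ?_
      have hrw : (1-μ) ^ (q-1) = (1-μ) ^ (q-2) * (1-μ) := by
        rw [show q-1 = (q-2) + 1 by ring, Real.rpow_add_one h1.ne']
      rw [show q-1-1 = q-2 by ring, hrw]; ring
    · filter_upwards with μ
      simpa using (hasDerivAt_pow 2 μ)
    · filter_upwards [self_mem_nhdsWithin] with μ (hμ : 0 < μ)
      positivity
    · have hc : ContinuousAt (fun μ : ℝ => 1 - (1 + (q-1)*μ) * (1-μ) ^ (q-1)) 0 := by
        have : ContinuousAt (fun μ : ℝ => (1-μ) ^ (q-1)) 0 :=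
          (Real.continuousAt_rpow_const (1-0) (q-1) (Or.inl (by norm_num))).comp
            (continuousAt_const.sub continuousAt_id)
        fun_prop
      have := hc.tendsto.mono_left (nhdsWithin_le_nhds (s := Set.Ioi (0:ℝ)))
      simpa using this
    · have : Tendsto (fun μ : ℝ => μ ^ 2) (nhds 0) (nhds ((0:ℝ)^2)) :=
        (continuous_pow 2).continuousAt.tendsto
      simpa using this.mono_left nhdsWithin_le_nhds
    · have hb : Tendsto (fun μ : ℝ => q * (q-1) * (1-μ) ^ (q-2) / 2)
          (nhdsWithin 0 (Set.Ioi 0)) (nhds (q * (q-1) / 2)) := by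
        have h1 : ContinuousAt (fun μ : ℝ => (1-μ) ^ (q-2)) 0 :=
          (Real.continuousAt_rpow_const (1-0) (q-2) (Or.inl (by norm_num))).comp
            (continuousAt_const.sub continuousAt_id)
        have := ((h1.tendsto.const_mul (q * (q-1))).div_const 2).mono_left
          (nhdsWithin_le_nhds (s := Set.Ioi (0:ℝ)))
        simpa using this
      apply hb.congr'
      filter_upwards [self_mem_nhdsWithin] with μ (hμ : 0 < μ)
      field_simp
  -- limit of μ^{q-2}
  have hL : Tendsto (fun μ : ℝ => μ ^ (q-2)) (nhdsWithin 0 (Set.Ioi 0))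
      (nhds ((0:ℝ) ^ (q-2))) :=
    (Real.continuousAt_rpow_const 0 (q-2) (Or.inr hq2)).tendsto.mono_left nhdsWithin_le_nhds
  have hb2 : Tendsto (fun μ : ℝ => (1-μ) ^ (q-2)) (nhdsWithin 0 (Set.Ioi 0)) (nhds 1) := by
    have h1 : ContinuousAt (fun μ : ℝ => (1-μ) ^ (q-2)) 0 :=
      (Real.continuousAt_rpow_const (1-0) (q-2) (Or.inl (by norm_num))).comp
        (continuousAt_const.sub continuousAt_id)
    have := h1.tendsto.mono_left (nhdsWithin_le_nhds (s := Set.Ioi (0:ℝ)))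
    simpa using this
  set L : ℝ := (0:ℝ) ^ (q-2) with hLdef
  have hL0 : 0 ≤ L := Real.rpow_nonneg le_rfl _
  have hcomb : Tendsto (fun μ : ℝ =>
      ((q-1) * μ ^ (q-2) + (1 - (1 + (q-1)*μ) * (1-μ) ^ (q-1)) / μ ^ 2) /
        (q * (q-1) * (μ ^ (q-2) + (1-μ) ^ (q-2))))
      (nhdsWithin 0 (Set.Ioi 0))
      (nhds (((q-1) * L + q * (q-1) / 2) / (q * (q-1) * (L + 1)))) := by
    apply Tendsto.div
    · exact (hL.const_mul (q-1)).add hf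
    · exact (hL.add hb2).const_mul (q * (q-1))
    · have : (0:ℝ) < q * (q-1) * (L + 1) := by positivity
      exact this.ne'
  have hval : ((q-1) * L + q * (q-1) / 2) / (q * (q-1) * (L + 1)) = 1 / 2 := by
    rcases eq_or_lt_of_le hq with h | h
    · have : L = 1 := by rw [hLdef, ← h]; norm_num
      rw [this, ← h]; norm_num
    · have : L = 0 := Real.zero_rpow (by linarith)
      rw [this]
      field_simp
      ring
  rw [← hval]
  apply hcomb.congr'
  filter_upwards [Ioo_mem_nhdsGT_of_mem (by norm_num : (0:ℝ) ∈ Ico 0 (1/2))] with μ hμ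
  obtain ⟨hμ0, hμ12⟩ := hμ
  have h1μ : (0:ℝ) < 1 - μ := by linarith
  have ha2 : (0:ℝ) ≤ μ ^ (q-2) := Real.rpow_nonneg hμ0.le _
  have hb2' : (0:ℝ) < (1-μ) ^ (q-2) := Real.rpow_pos_of_pos h1μ _
  have ha1 : μ ^ (q-1) = μ ^ (q-2) * μ := by
    rw [show q-1 = (q-2) + 1 by ring, Real.rpow_add_one hμ0.ne']
  have hb1 : (1-μ) ^ (q-1) = (1-μ) ^ (q-2) * (1-μ) := by
    rw [show q-1 = (q-2) + 1 by ring, Real.rpow_add_one h1μ.ne']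
  have ha : μ ^ q = μ ^ (q-2) * μ ^ 2 := by
    have h := Real.rpow_add hμ0 (q-2) 2
    rw [show (q-2)+(2:ℝ) = q by ring] at h
    rw [h, show ((2:ℝ)) = ((2:ℕ):ℝ) by norm_num, Real.rpow_natCast]
  have hb : (1-μ) ^ q = (1-μ) ^ (q-2) * (1-μ) ^ 2 := by
    have h := Real.rpow_add h1μ (q-2) 2
    rw [show (q-2)+(2:ℝ) = q by ring] at h
    rw [h, show ((2:ℝ)) = ((2:ℕ):ℝ) by norm_num, Real.rpow_natCast]
  have hBlt : μ ^ (q-1) < (1-μ) ^ (q-1) :=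
    Real.rpow_lt_rpow hμ0.le (by linarith) (by linarith)
  have hB : μ ^ (q-1) - (1-μ) ^ (q-1) ≠ 0 := by linarith
  have hC : (0:ℝ) < μ ^ (q-2) + (1-μ) ^ (q-2) := by linarith
  simp only
  rw [ha, hb, ha1, hb1]
  rw [ha1, hb1] at hB
  have hB' : μ ^ (q-2) * μ - (1-μ) * (1-μ) ^ (q-2) ≠ 0 := by rwa [mul_comm (1-μ)]
  field_simp
  ring
end

section
/- (Split-optimization regret bound.) Under the same data assumptions as the perceptron-type setting ($\|\mathbf{z}_i\|\le 1$, $\langle\mathbf{w}_*,\mathbf{z}_i\rangle\ge\gamma$, $\|\mathbf{w}_*\|=1$), let $\ell$ be convex, nonincreasing, differentiable with $|\ell'| \le C_g$, and run GD $\mathbf{w}_{k+1}=\mathbf{w}_k-\eta\nabla L(\mathbf{w}_k)$ from $\mathbf{w}_0$. For any $\theta \ge 0$, with $\mathbf{u} := (\theta + \frac{\eta C_g}{2\gamma})\mathbf{w}_*$, for every $t \ge 1$: $\frac{\|\mathbf{w}_t-\mathbf{u}\|^2}{2\eta t} + \frac1t\sum_{k=0}^{t-1}L(\mathbf{w}_k)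 \le \ell(\gamma\theta) + \frac{\|\mathbf{w}_0-\mathbf{u}\|^2}{2\eta t}$. -/
open RealInnerProductSpace

lemma tangent_le {f : ℝ → ℝ} (hdiff : Differentiable ℝ f) (hconv : ConvexOn ℝ Set.univ f)
    (x y : ℝ) : f x + deriv f x * (y - x) ≤ f y := by
  rcases lt_trichotomy x y with h | h | h
  · have h1 := hconv.deriv_le_slope (Set.mem_univ x) (Set.mem_univ y) h (hdiff x)
    rw [slope_def_field, le_div_iff₀ (sub_pos.2 h)] at h1
    linarith
  · simp [h]
  · have h1 := hconv.slope_le_deriv (Set.mem_univ y) (Set.mem_univ x) h (hdiff x)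
    rw [slope_def_field, div_le_iff₀ (sub_pos.2 h)] at h1
    linarith

lemma deriv_nonpos_of_antitone {f : ℝ → ℝ} (hdiff : Differentiable ℝ f)
    (hconv : ConvexOn ℝ Set.univ f) (hmono : Antitone f) (x : ℝ) : deriv f x ≤ 0 := by
  have h1 := tangent_le hdiff hconv x (x + 1)
  have h2 := hmono (by linarith : x ≤ x + 1)
  simp at h1
  linarith

/-- Split-optimization regret bound. -/
theorem split_optimization_regret_bound
    {E : Type*} [NormedAddCommGroup E] [InnerProductSpace ℝ E]
    (n : ℕ) (hn : 0 < n) (z : Fin n → E) (hz : ∀ i, ‖z i‖ ≤ 1)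
    (wstar : E) (hwstar : ‖wstar‖ = 1) (γ : ℝ) (hγ : 0 < γ)
    (hsep : ∀ i, γ ≤ ⟪wstar, z i⟫)
    (ℓ : ℝ → ℝ) (hdiff : Differentiable ℝ ℓ)
    (hconv : ConvexOn ℝ Set.univ ℓ) (hmono : Antitone ℓ)
    (Cg : ℝ) (hCg : 0 < Cg) (hlip : ∀ s : ℝ, |deriv ℓ s| ≤ Cg)
    (η : ℝ) (hη : 0 < η)
    (L : E → ℝ) (hL : ∀ v : E, L v = (n : ℝ)⁻¹ * ∑ i : Fin n, ℓ (⟪v, z i⟫))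
    (w : ℕ → E)
    (hupd : ∀ t : ℕ, w (t + 1) =
      w t - η • ((n : ℝ)⁻¹ • ∑ i : Fin n, deriv ℓ (⟪w t, z i⟫) • z i))
    (θ : ℝ) (hθ : 0 ≤ θ) :
    ∀ t : ℕ, 1 ≤ t →
      ‖w t - (θ + η * Cg / (2 * γ)) • wstar‖ ^ 2 / (2 * η * t) +
          (t : ℝ)⁻¹ * ∑ k ∈ Finset.range t, L (w k) ≤
        ℓ (γ * θ) +
          ‖w 0 - (θ + η * Cg / (2 * γ)) • wstar‖ ^ 2 / (2 * η * t) := by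
  have hn' : (0:ℝ) < (n:ℝ) := by exact_mod_cast hn
  set u : E := (θ + η * Cg / (2 * γ)) • wstar with hu
  -- key one-step inequality
  have key : ∀ k : ℕ, ‖w (k+1) - u‖ ^ 2 + 2 * η * L (w k) ≤
      ‖w k - u‖ ^ 2 + 2 * η * ℓ (γ * θ) := by
    intro k
    set g : E := (n : ℝ)⁻¹ • ∑ i : Fin n, deriv ℓ (⟪w k, z i⟫) • z i with hg
    set d : Fin n → ℝ := fun i => deriv ℓ (⟪w k, z i⟫) with hd
    have hdle : ∀ i, d i ≤ 0 := fun i => deriv_nonpos_of_antitone hdiff hconv hmono _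
    set S : ℝ := (n : ℝ)⁻¹ * ∑ i : Fin n, (-(d i)) with hS
    have hS0 : 0 ≤ S := by
      apply mul_nonneg (by positivity)
      exact Finset.sum_nonneg fun i _ => by linarith [hdle i]
    have hSC : S ≤ Cg := by
      rw [hS, inv_mul_le_iff₀ hn']
      calc ∑ i : Fin n, (-(d i)) ≤ ∑ i : Fin n, Cg := by
            apply Finset.sum_le_sum
            intro i _
            have := hlip (⟪w k, z i⟫)
            rw [abs_le] at this
            linarith [this.1]
        _ = (n:ℝ) * Cg := by simp [mul_comm]
    have hgnorm : ‖g‖ ≤ S := by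
      rw [hg, norm_smul]
      have h1 : ‖∑ i : Fin n, d i • z i‖ ≤ ∑ i : Fin n, (-(d i)) := by
        refine (norm_sum_le _ _).trans (Finset.sum_le_sum fun i _ => ?_)
        rw [norm_smul]
        calc ‖d i‖ * ‖z i‖ ≤ ‖d i‖ * 1 :=
              mul_le_mul_of_nonneg_left (hz i) (norm_nonneg _)
          _ = |d i| := by simp
          _ = -(d i) := abs_of_nonpos (hdle i)
      calc ‖(n:ℝ)⁻¹‖ * ‖∑ i : Fin n, d i • z i‖
          ≤ (n:ℝ)⁻¹ * ∑ i : Fin n, (-(d i)) := by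
            rw [Real.norm_eq_abs, abs_of_nonneg (by positivity)]
            exact mul_le_mul_of_nonneg_left h1 (by positivity)
        _ = S := rfl
    have hinner : ∀ v : E, ⟪v, g⟫ = (n : ℝ)⁻¹ * ∑ i : Fin n, d i * ⟪v, z i⟫ := by
      intro v
      rw [hg, real_inner_smul_right, inner_sum]
      congr 1
      exact Finset.sum_congr rfl fun i _ => real_inner_smul_right _ _ _
    -- part 1: convexity
    have h1 : ⟪θ • wstar - w k, g⟫ + L (w k) ≤ ℓ (γ * θ) := by
      have expand : ⟪θ • wstar - w k, g⟫ + L (w k) =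
          (n : ℝ)⁻¹ * ∑ i : Fin n,
            (d i * (θ * ⟪wstar, z i⟫ - ⟪w k, z i⟫) + ℓ (⟪w k, z i⟫)) := by
        rw [hinner, hL, Finset.sum_add_distrib, mul_add]
        congr 2
        exact Finset.sum_congr rfl fun i _ => by
          rw [inner_sub_left, real_inner_smul_left]
      rw [expand]
      have hpt : ∀ i : Fin n,
          d i * (θ * ⟪wstar, z i⟫ - ⟪w k, z i⟫) + ℓ (⟪w k, z i⟫) ≤ ℓ (γ * θ) := by
        intro i
        have ht := tangent_le hdiff hconv (⟪w k, z i⟫) (θ * ⟪wstar, z i⟫)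
        have hmle : ℓ (θ * ⟪wstar, z i⟫) ≤ ℓ (γ * θ) := by
          apply hmono
          calc γ * θ = θ * γ := mul_comm _ _
            _ ≤ θ * ⟪wstar, z i⟫ := mul_le_mul_of_nonneg_left (hsep i) hθ
        linarith
      calc (n : ℝ)⁻¹ * ∑ i : Fin n,
            (d i * (θ * ⟪wstar, z i⟫ - ⟪w k, z i⟫) + ℓ (⟪w k, z i⟫))
          ≤ (n : ℝ)⁻¹ * ∑ _i : Fin n, ℓ (γ * θ) := by
            apply mul_le_mul_of_nonneg_left _ (by positivity)
            exact Finset.sum_le_sum fun i _ => hpt i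
        _ = ℓ (γ * θ) := by
            rw [Finset.sum_const]
            field_simp
            simp
    -- part 2: margin term kills the gradient norm
    have h2 : ⟪(η * Cg / (2 * γ)) • wstar, g⟫ + (η / 2) * ‖g‖ ^ 2 ≤ 0 := by
      have hws : ⟪wstar, g⟫ ≤ -(γ * S) := by
        rw [hinner]
        have : ∑ i : Fin n, d i * ⟪wstar, z i⟫ ≤ ∑ i : Fin n, γ * d i := by
          apply Finset.sum_le_sum
          intro i _
          calc d i * ⟪wstar, z i⟫ ≤ d i * γ :=
                mul_le_mul_of_nonpos_left (hsep i) (hdle i)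
            _ = γ * d i := mul_comm _ _
        calc (n:ℝ)⁻¹ * ∑ i : Fin n, d i * ⟪wstar, z i⟫
            ≤ (n:ℝ)⁻¹ * ∑ i : Fin n, γ * d i :=
              mul_le_mul_of_nonneg_left this (by positivity)
          _ = -(γ * S) := by rw [hS, ← Finset.mul_sum, Finset.sum_neg_distrib]; ring
      have hgsq : ‖g‖ ^ 2 ≤ Cg * S := by
        calc ‖g‖ ^ 2 ≤ S ^ 2 := by
              apply pow_le_pow_left₀ (norm_nonneg _) hgnorm
          _ = S * S := sq S
          _ ≤ Cg * S := mul_le_mul_of_nonneg_right hSC hS0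
      rw [real_inner_smul_left]
      have hcoef : 0 ≤ η * Cg / (2 * γ) := by positivity
      have : η * Cg / (2 * γ) * ⟪wstar, g⟫ ≤ η * Cg / (2 * γ) * (-(γ * S)) :=
        mul_le_mul_of_nonneg_left hws hcoef
      have heq : η * Cg / (2 * γ) * (-(γ * S)) = -(η * Cg * S / 2) := by
        field_simp
      nlinarith [hgsq, hη.le]
    -- combine
    have hsplit : w (k+1) - u = (w k - u) - η • g := by
      rw [hupd k, ← hg]
      abel
    rw [hsplit, norm_sub_sq_real, real_inner_smul_right, norm_smul,
        Real.norm_eq_abs, abs_of_pos hη, mul_pow]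
    have hu2 : u = θ • wstar + (η * Cg / (2 * γ)) • wstar := by
      rw [hu, ← add_smul]
    have hinner_split : ⟪w k - u, g⟫ =
        ⟪w k - θ • wstar, g⟫ - ⟪(η * Cg / (2 * γ)) • wstar, g⟫ := by
      rw [hu2]
      rw [show w k - (θ • wstar + (η * Cg / (2 * γ)) • wstar)
          = (w k - θ • wstar) - (η * Cg / (2 * γ)) • wstar by abel]
      rw [inner_sub_left]
    have hflip : ⟪θ • wstar - w k, g⟫ = -⟪w k - θ • wstar, g⟫ := by
      rw [show θ • wstar - w k = -(w k - θ • wstar) by abel, inner_neg_left]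
    rw [hflip] at h1
    nlinarith [h1, h2, hη]
  -- telescoping
  have tel : ∀ t : ℕ, ‖w t - u‖ ^ 2 + 2 * η * ∑ k ∈ Finset.range t, L (w k) ≤
      ‖w 0 - u‖ ^ 2 + 2 * η * (t * ℓ (γ * θ)) := by
    intro t
    induction t with
    | zero => simp
    | succ t ih =>
      rw [Finset.sum_range_succ, Nat.cast_succ]
      have := key t
      nlinarith [this, ih]
  intro t ht
  have ht0 : (0:ℝ) < (t:ℝ) := by exact_mod_cast ht
  have h2t : (0:ℝ) < 2 * η * t := by positivity
  have hT := tel t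
  rw [div_add' _ _ _ h2t.ne', ← sub_nonneg]
  rw [show ℓ (γ * θ) + ‖w 0 - u‖ ^ 2 / (2 * η * t)
      - (‖w t - u‖ ^ 2 + (t:ℝ)⁻¹ * (∑ k ∈ Finset.range t, L (w k)) * (2 * η * t)) / (2 * η * t)
      = ((2 * η * t * ℓ (γ * θ) + ‖w 0 - u‖ ^ 2)
        - (‖w t - u‖ ^ 2 + (t:ℝ)⁻¹ * (∑ k ∈ Finset.range t, L (w k)) * (2 * η * t)))
          / (2 * η * t) by field_simp]
  apply div_nonneg _ h2t.le
  have hsimp : (t:ℝ)⁻¹ * (∑ k ∈ Finset.range t, L (w k)) * (2 * η * t)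
      = 2 * η * ∑ k ∈ Finset.range t, L (w k) := by
    field_simp
  rw [hsimp]
  nlinarith [hT]
end

section
/- (Modified descent lemma under self-bounding.) Let $\ell$ be differentiable with $g := -\ell' \ge 0$ and self-bounding: $g \le C_\beta\ell$ and $\ell(z)\le\ell(x)+\ell'(x)(z-x)+C_\beta g(x)(z-x)^2$ whenever $|z-x|<1$. Let $L(\mathbf{w})=\frac1n\sum_i\ell(\langle\mathbf{w},\mathbf{z}_i\rangle)$, $G(\mathbf{w})=\frac1n\sum_i g(\langle\mathbf{w},\mathbf{z}_i\rangle)$, with $\|\mathbf{z}_i\|\le 1$, and run GD $\mathbf{w}_{t+1}=\mathbf{w}_t-\eta\nabla L(\mathbf{w}_t)$. If $L(\mathbf{w}_s) \le \frac{1}{4C_\beta^2\eta}$ for some $s$, then for all $t \ge s$: $L(\mathbf{w}_t)\le\frac{1}{4C_\beta^2\eta}$, $G(\mathbf{w}_t)\le\frac{1}{4C_\beta\eta}$, and $L(\mathbf{w}_{t+1}) \le L(\mathbf{w}_t) - \frac{3\eta}{4}\|\nabla L(\mathbf{w}_t)\|^2$. -/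
open RealInnerProductSpace

/-- Modified descent lemma under the self-bounding property. -/
theorem modified_descent_lemma
    {E : Type*} [NormedAddCommGroup E] [InnerProductSpace ℝ E]
    (n : ℕ) (hn : 0 < n) (z : Fin n → E) (hz : ∀ i, ‖z i‖ ≤ 1)
    (ℓ : ℝ → ℝ) (hdiff : Differentiable ℝ ℓ) (hnonneg : ∀ s, 0 ≤ ℓ s)
    (hg : ∀ s : ℝ, 0 ≤ -deriv ℓ s)
    (Cβ : ℝ) (hCβ : 0 < Cβ)
    (hsb1 : ∀ s : ℝ, -deriv ℓ s ≤ Cβ * ℓ s)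
    (hsb2 : ∀ x s : ℝ, |s - x| < 1 →
      ℓ s ≤ ℓ x + deriv ℓ x * (s - x) + Cβ * (-deriv ℓ x) * (s - x) ^ 2)
    (L : E → ℝ) (hL : ∀ v : E, L v = (n : ℝ)⁻¹ * ∑ i : Fin n, ℓ (⟪v, z i⟫))
    (G : E → ℝ)
    (hG : ∀ v : E, G v = (n : ℝ)⁻¹ * ∑ i : Fin n, -deriv ℓ (⟪v, z i⟫))
    (gradL : E → E)
    (hgrad : ∀ v : E,
      gradL v = (n : ℝ)⁻¹ • ∑ i : Fin n, deriv ℓ (⟪v, z i⟫) • z i)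
    (η : ℝ) (hη : 0 < η)
    (w : ℕ → E) (hupd : ∀ t : ℕ, w (t + 1) = w t - η • gradL (w t))
    (hstep : ∀ t : ℕ, η * ‖gradL (w t)‖ < 1)
    (s : ℕ) (hs : L (w s) ≤ 1 / (4 * Cβ ^ 2 * η)) :
    ∀ t : ℕ, s ≤ t →
      L (w t) ≤ 1 / (4 * Cβ ^ 2 * η) ∧
      G (w t) ≤ 1 / (4 * Cβ * η) ∧
      L (w (t + 1)) ≤ L (w t) - (3 * η / 4) * ‖gradL (w t)‖ ^ 2 := by
  have hn' : (0:ℝ) < (n:ℝ) := by exact_mod_cast hn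
  have hninv : (0:ℝ) ≤ (n:ℝ)⁻¹ := by positivity
  have hGL : ∀ v : E, G v ≤ Cβ * L v := by
    intro v
    rw [hG, hL]
    calc (n:ℝ)⁻¹ * ∑ i : Fin n, -deriv ℓ (⟪v, z i⟫)
        ≤ (n:ℝ)⁻¹ * ∑ i : Fin n, Cβ * ℓ (⟪v, z i⟫) :=
          mul_le_mul_of_nonneg_left (Finset.sum_le_sum fun i _ => hsb1 _) hninv
      _ = Cβ * ((n:ℝ)⁻¹ * ∑ i : Fin n, ℓ (⟪v, z i⟫)) := by
          rw [← Finset.mul_sum]; ring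
  -- G bound from L bound
  have hGfromL : ∀ v : E, L v ≤ 1 / (4 * Cβ ^ 2 * η) → G v ≤ 1 / (4 * Cβ * η) := by
    intro v hv
    have := hGL v
    have h : Cβ * L v ≤ Cβ * (1 / (4 * Cβ ^ 2 * η)) :=
      mul_le_mul_of_nonneg_left hv hCβ.le
    have heq : Cβ * (1 / (4 * Cβ ^ 2 * η)) = 1 / (4 * Cβ * η) := by
      field_simp
    linarith
  -- descent step
  have hdesc : ∀ t : ℕ, G (w t) ≤ 1 / (4 * Cβ * η) →
      L (w (t + 1)) ≤ L (w t) - (3 * η / 4) * ‖gradL (w t)‖ ^ 2 := by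
    intro t hGt
    set g := gradL (w t) with hgdef
    have hbi : ∀ i : Fin n, ⟪w (t+1), z i⟫ = ⟪w t, z i⟫ - η * ⟪g, z i⟫ := by
      intro i; rw [hupd t, inner_sub_left, real_inner_smul_left]
    have hci : ∀ i : Fin n, (⟪g, z i⟫ : ℝ)^2 ≤ ‖g‖^2 := by
      intro i
      have h1 : |⟪g, z i⟫| ≤ ‖g‖ * ‖z i‖ := abs_real_inner_le_norm g (z i)
      have h2 : ‖g‖ * ‖z i‖ ≤ ‖g‖ * 1 :=
        mul_le_mul_of_nonneg_left (hz i) (norm_nonneg g)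
      have h3 : |⟪g, z i⟫| ≤ ‖g‖ := by linarith
      calc (⟪g, z i⟫ : ℝ)^2 = |⟪g, z i⟫|^2 := (sq_abs _).symm
        _ ≤ ‖g‖^2 := by
            exact pow_le_pow_left₀ (abs_nonneg _) h3 2
    -- per-index inequality
    have hidx : ∀ i : Fin n, ℓ (⟪w (t+1), z i⟫) ≤
        ℓ (⟪w t, z i⟫) - η * (deriv ℓ (⟪w t, z i⟫) * ⟪g, z i⟫)
          + Cβ * (-deriv ℓ (⟪w t, z i⟫)) * (η^2 * ‖g‖^2) := by
      intro i
      have hdist : |⟪w (t+1), z i⟫ - ⟪w t, z i⟫| < 1 := by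
        rw [hbi i]
        have : |⟪w t, z i⟫ - η * ⟪g, z i⟫ - ⟪w t, z i⟫| = η * |⟪g, z i⟫| := by
          rw [show ⟪w t, z i⟫ - η * ⟪g, z i⟫ - ⟪w t, z i⟫ = -(η * ⟪g, z i⟫) by ring,
            abs_neg, abs_mul, abs_of_pos hη]
        rw [this]
        have h1 : |⟪g, z i⟫| ≤ ‖g‖ * ‖z i‖ := abs_real_inner_le_norm g (z i)
        have h2 : ‖g‖ * ‖z i‖ ≤ ‖g‖ * 1 :=
          mul_le_mul_of_nonneg_left (hz i) (norm_nonneg g)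
        have := hstep t
        rw [← hgdef] at this
        nlinarith [abs_nonneg (⟪g, z i⟫ : ℝ), hη]
      have h2 := hsb2 (⟪w t, z i⟫) (⟪w (t+1), z i⟫) hdist
      rw [hbi i] at h2 ⊢
      have hsub : ⟪w t, z i⟫ - η * ⟪g, z i⟫ - ⟪w t, z i⟫ = -(η * ⟪g, z i⟫) := by ring
      rw [hsub] at h2
      have hlast : Cβ * (-deriv ℓ (⟪w t, z i⟫)) * (-(η * ⟪g, z i⟫))^2 ≤
          Cβ * (-deriv ℓ (⟪w t, z i⟫)) * (η^2 * ‖g‖^2) := by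
        apply mul_le_mul_of_nonneg_left _ (mul_nonneg hCβ.le (hg _))
        have := hci i
        nlinarith [sq_nonneg η]
      nlinarith [h2, hlast]
    -- sum up
    have hsum : L (w (t+1)) ≤ (n:ℝ)⁻¹ * ∑ i : Fin n,
        (ℓ (⟪w t, z i⟫) - η * (deriv ℓ (⟪w t, z i⟫) * ⟪g, z i⟫)
          + Cβ * (-deriv ℓ (⟪w t, z i⟫)) * (η^2 * ‖g‖^2)) := by
      rw [hL]
      exact mul_le_mul_of_nonneg_left (Finset.sum_le_sum fun i _ => hidx i) hninv
    have hexpand : (n:ℝ)⁻¹ * ∑ i : Fin n,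
        (ℓ (⟪w t, z i⟫) - η * (deriv ℓ (⟪w t, z i⟫) * ⟪g, z i⟫)
          + Cβ * (-deriv ℓ (⟪w t, z i⟫)) * (η^2 * ‖g‖^2))
        = L (w t) - η * ((n:ℝ)⁻¹ * ∑ i : Fin n, deriv ℓ (⟪w t, z i⟫) * ⟪g, z i⟫)
          + Cβ * (η^2 * ‖g‖^2) * G (w t) := by
      rw [hL, hG]
      rw [Finset.sum_add_distrib, Finset.sum_sub_distrib]
      rw [show (∑ i : Fin n, η * (deriv ℓ (⟪w t, z i⟫) * ⟪g, z i⟫))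
          = η * ∑ i : Fin n, deriv ℓ (⟪w t, z i⟫) * ⟪g, z i⟫ by
        rw [Finset.mul_sum]]
      rw [show (∑ i : Fin n, Cβ * (-deriv ℓ (⟪w t, z i⟫)) * (η^2 * ‖g‖^2))
          = (Cβ * (η^2 * ‖g‖^2)) * ∑ i : Fin n, -deriv ℓ (⟪w t, z i⟫) by
        rw [Finset.mul_sum]; exact Finset.sum_congr rfl fun i _ => by ring]
      ring
    have hinner : ((n:ℝ)⁻¹ * ∑ i : Fin n, deriv ℓ (⟪w t, z i⟫) * ⟪g, z i⟫)
        = ‖g‖^2 := by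
      have h1 : (⟪g, g⟫ : ℝ) = (n:ℝ)⁻¹ * ∑ i : Fin n, deriv ℓ (⟪w t, z i⟫) * ⟪g, z i⟫ := by
        nth_rewrite 2 [hgdef]
        rw [hgrad (w t), real_inner_smul_right, inner_sum]
        congr 1
        exact Finset.sum_congr rfl fun i _ => by
          rw [real_inner_smul_right]
      rw [← h1, real_inner_self_eq_norm_sq]
    rw [hexpand, hinner] at hsum
    have hGnn : 0 ≤ G (w t) := by
      rw [hG]
      exact mul_nonneg hninv (Finset.sum_nonneg fun i _ => hg _)
    have hfinal : Cβ * (η^2 * ‖g‖^2) * G (w t) ≤ (η / 4) * ‖g‖^2 := by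
      have h1 : Cβ * (η^2 * ‖g‖^2) * G (w t) ≤
          Cβ * (η^2 * ‖g‖^2) * (1 / (4 * Cβ * η)) := by
        apply mul_le_mul_of_nonneg_left hGt
        positivity
      have h2 : Cβ * (η^2 * ‖g‖^2) * (1 / (4 * Cβ * η)) = (η / 4) * ‖g‖^2 := by
        field_simp
      linarith
    nlinarith [hsum, hfinal]
  -- induction
  have hLbound : ∀ t : ℕ, s ≤ t → L (w t) ≤ 1 / (4 * Cβ ^ 2 * η) := by
    intro t ht
    induction t with
    | zero => simpa [Nat.le_zero.mp ht] using hs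
    | succ k ih =>
      rcases Nat.lt_or_ge s (k+1) with h | h
      · have hk : s ≤ k := Nat.lt_succ_iff.mp h
        have hLk := ih hk
        have hGk := hGfromL _ hLk
        have := hdesc k hGk
        have hsq : 0 ≤ (3 * η / 4) * ‖gradL (w k)‖ ^ 2 := by positivity
        linarith
      · have : s = k + 1 := le_antisymm ht h
        rw [← this]; exact hs
  intro t ht
  refine ⟨hLbound t ht, hGfromL _ (hLbound t ht), hdesc t (hGfromL _ (hLbound t ht))⟩
end
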